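/- Let N ≥ 2 and L > 0, and define the critical force F_cr = ( (1/L) · Σ_{k=1}^{N} k^{-1/2} )^2. Then the unique equilibrium configuration on [-L, 0] for constant force F > 0 satisfies: x_N > -L if F > F_cr, and x_N = -L if F ≤ F_cr. -/

import Mathlib

/-- An equilibrium (fixed-point) configuration of `N+1` charges
`-L ≤ x N < ... < x 1 < x 0 = 0` on `[-L, 0]` under constant external force `F`:
with gaps `δ k = x (k-1) - x k` and `f k = (δ k)⁻²`, the force balance
`f (k+1) + F = f k` holds for `k = 1, ..., N-1`, and at the left end either
`x N = -L` with `f N ≥ F`, or `x N > -L` with `f N = F`. Such a configuration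
exists and is unique. -/
def IsEquilibConst (N : ℕ) (L F : ℝ) (x : ℕ → ℝ) : Prop :=
  x 0 = 0 ∧ (∀ k < N, x (k + 1) < x k) ∧ -L ≤ x N ∧
  (∀ k, 1 ≤ k → k < N →
    ((x k - x (k + 1)) ^ 2)⁻¹ + F = ((x (k - 1) - x k) ^ 2)⁻¹) ∧
  ((x N = -L ∧ F ≤ ((x (N - 1) - x N) ^ 2)⁻¹) ∨
   (-L < x N ∧ ((x (N - 1) - x N) ^ 2)⁻¹ = F))

/-- With critical force `F_cr = ((1/L) ∑_{k=1}^N k^(-1/2))²`,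
the equilibrium configuration satisfies `x N > -L` for `F > F_cr` and
`x N = -L` for `F ≤ F_cr`. -/
theorem critical_force_dichotomy
    (N : ℕ) (hN : 2 ≤ N) (L F : ℝ) (hL : 0 < L) (hF : 0 < F)
    (Fcr : ℝ)
    (hFcr : Fcr = ((1 / L) * ∑ k ∈ Finset.Icc 1 N, (Real.sqrt (k : ℝ))⁻¹) ^ 2)
    (x : ℕ → ℝ) (hx : IsEquilibConst N L F x) :
    (Fcr < F → -L < x N) ∧ (F ≤ Fcr → x N = -L) := by
  obtain ⟨hx0, hlt, hge, hrec, hend⟩ := hx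
  set S := ∑ k ∈ Finset.Icc 1 N, (Real.sqrt (k : ℝ))⁻¹ with hSdef
  have hSpos : 0 < S := by
    apply Finset.sum_pos
    · intro k hk
      simp only [Finset.mem_Icc] at hk
      have : (0:ℝ) < k := by exact_mod_cast Nat.lt_of_lt_of_le Nat.zero_lt_one hk.1
      positivity
    · exact ⟨1, by simp [Finset.mem_Icc]; omega⟩
  -- gaps positive
  have hgap : ∀ k, 1 ≤ k → k ≤ N → 0 < x (k - 1) - x k := by
    intro k hk1 hkN
    have := hlt (k - 1) (by omega)
    have hk : k - 1 + 1 = k := by omega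
    rw [hk] at this
    linarith
  set f : ℕ → ℝ := fun k => ((x (k - 1) - x k) ^ 2)⁻¹ with hfdef
  have hfpos : ∀ k, 1 ≤ k → k ≤ N → 0 < f k := by
    intro k hk1 hkN
    have := hgap k hk1 hkN
    positivity
  -- key recursion solved
  have key : ∀ j, j + 1 ≤ N → f (N - j) = f N + j * F := by
    intro j
    induction j with
    | zero => intro _; simp
    | succ j ih =>
      intro hj
      have ihv := ih (by omega)
      have hr := hrec (N - (j + 1)) (by omega) (by omega)
      have e1 : N - (j + 1) + 1 = N - j := by omega
      rw [e1] at hr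
      have e2 : f (N - (j+1)) = ((x (N - (j+1) - 1) - x (N - (j+1))) ^ 2)⁻¹ := rfl
      have e3 : f (N - j) = ((x (N - j - 1) - x (N - j)) ^ 2)⁻¹ := rfl
      have e4 : N - j - 1 = N - (j + 1) := by omega
      rw [e4] at e3
      rw [← e3, ← e2] at hr
      rw [← hr, ihv]
      push_cast
      ring
  have hf : ∀ k, 1 ≤ k → k ≤ N → f k = f N + ((N : ℝ) - k) * F := by
    intro k hk1 hkN
    have h1 := key (N - k) (by omega)
    have e : N - (N - k) = k := by omega
    rw [e] at h1
    rw [h1]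
    have : ((N - k : ℕ) : ℝ) = (N : ℝ) - k := by
      push_cast [Nat.cast_sub hkN]; ring
    rw [this]
  -- gap formula
  have hδ : ∀ k, 1 ≤ k → k ≤ N → x (k - 1) - x k = (Real.sqrt (f k))⁻¹ := by
    intro k hk1 hkN
    have hg := hgap k hk1 hkN
    have : Real.sqrt (f k) = (x (k - 1) - x k)⁻¹ := by
      rw [hfdef]
      simp only
      rw [Real.sqrt_inv, Real.sqrt_sq hg.le]
    rw [this, inv_inv]
  -- telescoping
  have htel : -(x N) = ∑ i ∈ Finset.range N, (Real.sqrt (f (i + 1)))⁻¹ := by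
    have t1 : ∑ i ∈ Finset.range N, (x i - x (i + 1)) = x 0 - x N :=
      Finset.sum_range_sub' x N
    rw [hx0, zero_sub] at t1
    rw [← t1]
    apply Finset.sum_congr rfl
    intro i hi
    simp only [Finset.mem_range] at hi
    have := hδ (i + 1) (by omega) (by omega)
    simpa using this
  have hfN1 : ∀ i, i < N → f (i + 1) = f N + ((N : ℝ) - (i + 1)) * F := by
    intro i hi
    have h := hf (i + 1) (by omega) (by omega)
    push_cast at h
    exact h
  -- the S identity
  have hSsum : ∑ i ∈ Finset.range N, (Real.sqrt (((N : ℝ) - i)))⁻¹ = S := by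
    rw [hSdef, ← Finset.Ico_add_one_right_eq_Icc, Finset.sum_Ico_eq_sum_range]
    simp only [Nat.add_sub_cancel]
    rw [← Finset.sum_range_reflect (fun j => (Real.sqrt ((1 + j : ℕ) : ℝ))⁻¹) N]
    apply Finset.sum_congr rfl
    intro i hi
    simp only [Finset.mem_range] at hi
    congr 2
    have : 1 + (N - 1 - i) = N - i := by omega
    rw [this]
    push_cast [Nat.cast_sub hi.le]
    ring
  have hsqF : 0 < Real.sqrt F := Real.sqrt_pos.mpr hF
  -- Case A consequences
  have caseA : ((x (N - 1) - x N) ^ 2)⁻¹ = F → -(x N) = (Real.sqrt F)⁻¹ * S := by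
    intro hA
    have hfN : f N = F := hA
    rw [htel, ← hSsum, Finset.mul_sum]
    apply Finset.sum_congr rfl
    intro i hi
    simp only [Finset.mem_range] at hi
    rw [hfN1 i hi, hfN]
    have hNi : (0:ℝ) ≤ (N : ℝ) - i := by
      have : (i:ℝ) < N := by exact_mod_cast hi
      linarith
    have : F + ((N : ℝ) - (i + 1)) * F = ((N : ℝ) - i) * F := by ring
    rw [this, Real.sqrt_mul hNi, mul_inv, mul_comm]
  -- Case B consequence
  have caseB : F ≤ ((x (N - 1) - x N) ^ 2)⁻¹ → -(x N) ≤ (Real.sqrt F)⁻¹ * S := by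
    intro hB
    have hfN : F ≤ f N := hB
    rw [htel, ← hSsum, Finset.mul_sum]
    apply Finset.sum_le_sum
    intro i hi
    simp only [Finset.mem_range] at hi
    rw [hfN1 i hi]
    have hNi : (1:ℝ) ≤ (N : ℝ) - i := by
      have : (i:ℝ) + 1 ≤ N := by exact_mod_cast hi
      linarith
    have h1 : ((N : ℝ) - i) * F ≤ f N + ((N : ℝ) - (i + 1)) * F := by nlinarith
    have h2 : 0 < ((N : ℝ) - i) * F := by nlinarith
    have h3 : Real.sqrt (((N:ℝ) - i) * F) ≤ Real.sqrt (f N + ((N : ℝ) - (i + 1)) * F) :=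
      Real.sqrt_le_sqrt h1
    have h4 : 0 < Real.sqrt (((N:ℝ) - i) * F) := Real.sqrt_pos.mpr h2
    calc (Real.sqrt (f N + ((N : ℝ) - (i + 1)) * F))⁻¹
        ≤ (Real.sqrt (((N:ℝ) - i) * F))⁻¹ := by
          apply inv_anti₀ h4 h3
      _ = (Real.sqrt F)⁻¹ * (Real.sqrt ((N:ℝ) - i))⁻¹ := by
          rw [Real.sqrt_mul (by linarith), mul_inv, mul_comm]
  have hFcr' : Fcr = (S / L) ^ 2 := by rw [hFcr]; ring
  constructor
  · intro hlt'
    rcases hend with ⟨hxN, hB⟩ | ⟨h, _⟩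
    · exfalso
      have := caseB hB
      rw [hxN, neg_neg] at this
      -- L ≤ (sqrt F)⁻¹ * S  ⟹ sqrt F * L ≤ S ⟹ F ≤ (S/L)^2
      have h1 : Real.sqrt F * L ≤ S := by
        have h := mul_le_mul_of_nonneg_left this hsqF.le
        rw [← mul_assoc, mul_inv_cancel₀ hsqF.ne', one_mul] at h
        exact h
      have h2 : Real.sqrt F ≤ S / L := by
        rw [le_div_iff₀ hL]; exact h1
      have h3 : F ≤ (S / L) ^ 2 := by
        have := mul_le_mul h2 h2 hsqF.le (by positivity)
        rw [Real.mul_self_sqrt hF.le] at this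
        nlinarith
      rw [← hFcr'] at h3
      linarith
    · exact h
  · intro hle
    rcases hend with ⟨hxN, _⟩ | ⟨h, hA⟩
    · exact hxN
    · exfalso
      have heq := caseA hA
      have h1 : (Real.sqrt F)⁻¹ * S < L := by rw [← heq]; linarith
      have h2 : S < Real.sqrt F * L := by
        have h := mul_lt_mul_of_pos_left h1 hsqF
        rw [← mul_assoc, mul_inv_cancel₀ hsqF.ne', one_mul] at h
        exact h
      have h3 : S / L < Real.sqrt F := by rw [div_lt_iff₀ hL]; linarith
      have h4 : (S / L)^2 < F := by
        have := mul_lt_mul'' h3 h3 (by positivity) (by positivity)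
        rw [Real.mul_self_sqrt hF.le] at this
        nlinarith
      rw [← hFcr'] at h4
      linarith
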